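/- Let X and Y be Banach spaces and 1 < p < ∞. If X and Y are both δ-average rough for some δ > 0, then X ⊕_p Y (the direct sum equipped with the norm ‖(x,y)‖ = (‖x‖^p + ‖y‖^p)^{1/p}) is 2^{−1/p}·δ-average rough. -/

import Mathlib

open Filter Topology ENNReal

noncomputable section

/-- A Banach space `X` is `δ`-average rough if for every finite family of unit vectors
`x₁, …, xₙ`, one has `limsup_{‖y‖→0} (1/n) ∑ᵢ (‖xᵢ+y‖+‖xᵢ-y‖-2)/‖y‖ ≥ δ`. -/
def AverageRough (X : Type*) [NormedAddCommGroup X] [NormedSpace ℝ X] (δ : ℝ) : Prop :=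
  ∀ n : ℕ, 0 < n → ∀ x : Fin n → X, (∀ i, ‖x i‖ = 1) →
    δ ≤ Filter.limsup
      (fun y : X => (1 / (n : ℝ)) * ∑ i, (‖x i + y‖ + ‖x i - y‖ - 2) / ‖y‖) (𝓝[≠] 0)

set_option linter.unusedSectionVars false
set_option maxHeartbeats 1000000

namespace ARAux
variable {E : Type*} [NormedAddCommGroup E] [NormedSpace ℝ E]

/-- The roughness quotient. -/
def D (x u : E) : ℝ := (‖x + u‖ + ‖x - u‖ - 2) / ‖u‖

lemma D_nonneg {x : E} (hx : ‖x‖ = 1) (u : E) : 0 ≤ D x u := by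
  apply div_nonneg _ (norm_nonneg _)
  have : ‖(x + u) + (x - u)‖ ≤ ‖x + u‖ + ‖x - u‖ := norm_add_le _ _
  have h2 : ‖(x + u) + (x - u)‖ = 2 := by
    have : (x + u) + (x - u) = (2:ℝ) • x := by module
    rw [this, norm_smul, hx]; norm_num
  linarith

lemma D_le_two {x : E} (hx : ‖x‖ = 1) (u : E) : D x u ≤ 2 := by
  rcases eq_or_ne u 0 with rfl | hu
  · simp [D, hx]
  · have hu' : 0 < ‖u‖ := norm_pos_iff.mpr hu
    rw [D, div_le_iff₀ hu']
    have h1 : ‖x + u‖ ≤ 1 + ‖u‖ := by simpa [hx] using norm_add_le x u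
    have h2 : ‖x - u‖ ≤ 1 + ‖u‖ := by simpa [hx] using norm_sub_le x u
    linarith

lemma D_mono {x : E} (hx : ‖x‖ = 1) {u : E} (hu : u ≠ 0) {c : ℝ} (hc : 1 ≤ c) :
    D x u ≤ D x (c • u) := by
  have hc0 : 0 < c := lt_of_lt_of_le one_pos hc
  have hu' : 0 < ‖u‖ := norm_pos_iff.mpr hu
  have hcu : ‖c • u‖ = c * ‖u‖ := by rw [norm_smul, Real.norm_eq_abs, abs_of_pos hc0]
  have hinv : c⁻¹ ≤ 1 := inv_le_one_of_one_le₀ hc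
  have hinv0 : 0 < c⁻¹ := inv_pos.mpr hc0
  have key : ∀ s : ℝ, c * ‖x + s • u‖ ≤ (c - 1) + ‖x + (s * c) • u‖ := by
    intro s
    have hdecomp : x + s • u = (1 - c⁻¹) • x + c⁻¹ • (x + (s * c) • u) := by
      rw [smul_add, smul_smul]
      have h' : c⁻¹ * (s * c) = s := by field_simp
      rw [h']; module
    have h := norm_add_le ((1 - c⁻¹) • x) (c⁻¹ • (x + (s * c) • u))
    rw [← hdecomp, norm_smul, norm_smul, hx, Real.norm_eq_abs, Real.norm_eq_abs,
      abs_of_nonneg (by linarith), abs_of_pos hinv0] at h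
    have h2 := mul_le_mul_of_nonneg_left h hc0.le
    calc c * ‖x + s • u‖ ≤ c * ((1 - c⁻¹) * 1 + c⁻¹ * ‖x + (s * c) • u‖) := h2
      _ = (c - 1) + ‖x + (s * c) • u‖ := by field_simp
  have k1 : c * ‖x + u‖ ≤ (c - 1) + ‖x + c • u‖ := by simpa using key 1
  have k2 : c * ‖x - u‖ ≤ (c - 1) + ‖x - c • u‖ := by
    have := key (-1); simpa [sub_eq_add_neg, neg_smul] using this
  rw [D, D, hcu, div_le_div_iff₀ hu' (by positivity)]
  nlinarith [hu'.le, norm_nonneg (x + c • u), norm_nonneg (x - c • u)]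

lemma holder_pair {P : ℝ} (hP : 1 < P) {a b s t : ℝ} (ha : 0 ≤ a) (hb : 0 ≤ b)
    (hs : 0 ≤ s) (ht : 0 ≤ t) (hab : a ^ P + b ^ P = 1) :
    a ^ (P - 1) * s + b ^ (P - 1) * t ≤ (s ^ P + t ^ P) ^ (1 / P) := by
  have hP0 : 0 < P := lt_trans one_pos hP
  have hP1 : (0:ℝ) < P - 1 := by linarith
  set Q := P / (P - 1) with hQ
  have hconj : Q.HolderConjugate P := (Real.HolderConjugate.conjExponent hP).symm
  have key := Real.inner_le_Lp_mul_Lq_of_nonneg (s := Finset.univ)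
    (f := ![a ^ (P - 1), b ^ (P - 1)]) (g := ![s, t]) hconj
    (by intro i _; fin_cases i <;> simp <;> positivity)
    (by intro i _; fin_cases i <;> simpa)
  simp [Fin.sum_univ_two] at key
  have hPQ : (P - 1) * Q = P := by rw [hQ]; field_simp
  have e1 : (a ^ (P - 1)) ^ Q = a ^ P := by rw [← Real.rpow_mul ha, hPQ]
  have e2 : (b ^ (P - 1)) ^ Q = b ^ P := by rw [← Real.rpow_mul hb, hPQ]
  rw [e1, e2, hab, Real.one_rpow, one_mul] at key
  rw [one_div]; exact key

/-- density helper -/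
lemma le_of_forall_lt_le {a b : ℝ} (h : ∀ t < a, t ≤ b) : a ≤ b := by
  by_contra h'
  push_neg at h'
  obtain ⟨t, h1, h2⟩ := exists_between h'
  exact absurd (h t h2) (not_le.mpr h1)


lemma freq_lt_limsup {α : Type*} {f : Filter α} [f.NeBot] {u : α → ℝ}
    (h0 : ∀ x, 0 ≤ u x) {t : ℝ} (ht : t < limsup u f) : ∃ᶠ x in f, t < u x :=
  frequently_lt_of_lt_limsup (isCoboundedUnder_le_of_le f h0) ht

lemma const_mul_limsup {α : Type*} {f : Filter α} [f.NeBot] {G : α → ℝ} {c δ C : ℝ}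
    (hc : 0 < c) (h0 : ∀ x, 0 ≤ G x) (hC : ∀ x, G x ≤ C) (hδ : δ ≤ limsup G f) :
    c * δ ≤ limsup (fun x => c * G x) f := by
  apply le_of_forall_lt_le
  intro s hs
  have hs' : s / c < δ := (div_lt_iff₀ hc).mpr (by linarith [mul_comm c δ])
  have hf : ∃ᶠ x in f, s / c < G x := freq_lt_limsup h0 (lt_of_lt_of_le hs' hδ)
  refine le_limsup_of_frequently_le (hf.mono fun x hx => ?_)
    (isBoundedUnder_of ⟨c * C, fun x => by nlinarith [h0 x, hC x]⟩)
  nlinarith [(div_lt_iff₀ hc).mp hx]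



lemma unit_norm (xx : E) (h : xx ≠ 0) : ‖(‖xx‖⁻¹ • xx : E)‖ = 1 := by
  rw [norm_smul, norm_inv, norm_norm, inv_mul_cancel₀ (norm_ne_zero_iff.mpr h)]

lemma weighted {X : Type*} [NormedAddCommGroup X] [NormedSpace ℝ X] [Nontrivial X]
    {δ : ℝ} (hδ : 0 < δ) (hX : AverageRough X δ)
    {m : ℕ} (x : Fin m → X) (hx : ∀ i, ‖x i‖ = 1) (w : Fin m → ℝ) (hw : ∀ i, 0 ≤ w i) :
    δ * ∑ i, w i ≤ limsup (fun u => ∑ i, w i * D (x i) u) (𝓝[≠] (0 : X)) := by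
  apply le_of_forall_lt_le
  intro t ht
  have hbound : ∀ u : X, (∑ i, w i * D (x i) u) ≤ 2 * ∑ i, w i := by
    intro u
    rw [Finset.mul_sum]
    exact Finset.sum_le_sum fun i _ => by
      rw [mul_comm 2 (w i)]
      exact mul_le_mul_of_nonneg_left (D_le_two (hx i) u) (hw i)
  set η := (δ * ∑ i, w i - t) / (δ * (m + 1)) with hη
  have hδm : (0:ℝ) < δ * (m + 1) := by positivity
  have hη0 : 0 < η := div_pos (by linarith) hδm
  have hηeq : δ * (m + 1) * η = δ * ∑ i, w i - t := by
    rw [hη]; field_simp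
  obtain ⟨M', hM'⟩ := exists_nat_one_div_lt hη0
  set M : ℕ := M' + 1 with hMdef
  have hM0 : (0:ℝ) < M := by positivity
  set k : Fin m → ℕ := fun i => ⌊w i * M⌋₊ with hk
  have hq_le : ∀ i, (k i : ℝ) / M ≤ w i := by
    intro i
    rw [div_le_iff₀ hM0]
    exact Nat.floor_le (mul_nonneg (hw i) hM0.le)
  have hq_gt : ∀ i, w i - η < (k i : ℝ) / M := by
    intro i
    have h1 : w i * M < k i + 1 := Nat.lt_floor_add_one _
    have h2 : (1:ℝ)/M < η := by exact_mod_cast hM'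
    have h3 : (1:ℝ) < η * M := by rw [div_lt_iff₀ hM0] at h2; linarith
    rw [sub_lt_iff_lt_add, div_add' _ _ _ hM0.ne', lt_div_iff₀ hM0]
    nlinarith
  have hpt : ∀ u, ∑ i, (k i : ℝ)/M * D (x i) u ≤ ∑ i, w i * D (x i) u := fun u =>
    Finset.sum_le_sum fun i _ => mul_le_mul_of_nonneg_right (hq_le i) (D_nonneg (hx i) u)
  have hmain : t ≤ limsup (fun u : X => ∑ i, (k i : ℝ)/M * D (x i) u) (𝓝[≠] (0:X)) := by
    rcases Nat.eq_zero_or_pos (∑ i, k i) with hK | hK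
    · have hk0 : ∀ i, k i = 0 := fun i =>
        (Finset.sum_eq_zero_iff.mp hK) i (Finset.mem_univ i)
      have hzero : (fun u : X => ∑ i, (k i : ℝ)/M * D (x i) u) = fun _ => (0:ℝ) := by
        funext u; simp [hk0]
      rw [hzero, limsup_const]
      have hwsmall : ∀ i, w i < η := by
        intro i
        have h := hq_gt i
        rw [hk0 i] at h
        simp only [Nat.cast_zero, zero_div] at h
        linarith
      have hsum : (∑ i, w i) ≤ m * η :=
        calc (∑ i, w i) ≤ ∑ _i : Fin m, η := Finset.sum_le_sum fun i _ => (hwsmall i).le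
          _ = m * η := by simp [Finset.sum_const, nsmul_eq_mul]
      nlinarith
    · set L : List X := (List.finRange m).flatMap fun i => List.replicate (k i) (x i) with hL
      have hlen : L.length = ∑ i, k i := by
        simp [hL, List.length_flatMap, Function.comp_def, List.length_replicate, Fin.sum_univ_def]
      have hlpos : 0 < L.length := hlen ▸ hK
      have hall : ∀ e ∈ L, ‖e‖ = 1 := by
        rw [hL]
        intro e he
        obtain ⟨i, _, hrep⟩ := List.mem_flatMap.mp he
        rw [List.eq_of_mem_replicate hrep]
        exact hx i
      have hg : ∀ j : Fin L.length, ‖L.get j‖ = 1 := fun j => hall _ (L.get_mem _)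
      have happ := hX L.length hlpos (fun j => L.get j) hg
      have hsumid : ∀ u : X,
          (∑ j, (‖L.get j + u‖ + ‖L.get j - u‖ - 2) / ‖u‖) = ∑ i, (k i : ℝ) * D (x i) u := by
        intro u
        have h1 : (∑ j, (‖L.get j + u‖ + ‖L.get j - u‖ - 2) / ‖u‖)
            = (L.map (fun e => D e u)).sum := by
          conv_rhs => rw [show L = List.ofFn L.get from (List.ofFn_get L).symm]
          rw [List.map_ofFn, List.sum_ofFn]
          rfl
        rw [h1, hL, List.map_flatMap, List.flatMap, List.sum_flatten, List.map_map]
        simp [Function.comp_def, List.map_replicate, List.sum_replicate, Fin.sum_univ_def,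
          nsmul_eq_mul]
      have hfunid : (fun u : X => ∑ i, (k i : ℝ)/M * D (x i) u)
          = fun u : X => ((∑ i, k i : ℕ) : ℝ)/M *
              ((1 / (L.length : ℝ)) * ∑ j, (‖L.get j + u‖ + ‖L.get j - u‖ - 2) / ‖u‖) := by
        funext u
        rw [hsumid u, hlen, Finset.mul_sum, Finset.mul_sum]
        refine Finset.sum_congr rfl fun i _ => ?_
        have hKne : ((∑ i, k i : ℕ) : ℝ) ≠ 0 := by
          exact_mod_cast hK.ne'
        have hKne' : (∑ x : Fin m, ((k x : ℕ):ℝ)) ≠ 0 := by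
          rw [← Nat.cast_sum]; exact hKne
        have hMne' : ((1 + M' : ℕ) : ℝ) ≠ 0 := Nat.cast_ne_zero.mpr (by omega)
        field_simp
      rw [hfunid]
      have hG0 : ∀ u : X, 0 ≤ (1 / (L.length : ℝ)) * ∑ j, (‖L.get j + u‖ + ‖L.get j - u‖ - 2) / ‖u‖ := by
        intro u
        apply mul_nonneg (by positivity)
        exact Finset.sum_nonneg fun j _ => D_nonneg (hg j) u
      have hG2 : ∀ u : X, (1 / (L.length : ℝ)) * ∑ j, (‖L.get j + u‖ + ‖L.get j - u‖ - 2) / ‖u‖ ≤ 2 := by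
        intro u
        have h1 : (∑ j, (‖L.get j + u‖ + ‖L.get j - u‖ - 2) / ‖u‖) ≤ (L.length : ℝ) * 2 := by
          calc (∑ j, (‖L.get j + u‖ + ‖L.get j - u‖ - 2) / ‖u‖)
              ≤ ∑ _j : Fin L.length, (2:ℝ) := Finset.sum_le_sum fun j _ => D_le_two (hg j) u
            _ = (L.length : ℝ) * 2 := by simp [Finset.sum_const, nsmul_eq_mul]
        have hlen0 : (0:ℝ) < (L.length : ℝ) := by exact_mod_cast hlpos
        rw [one_div, inv_mul_le_iff₀ hlen0]
        linarith
      have hKM0 : (0:ℝ) < ((∑ i, k i : ℕ) : ℝ) / M := by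
        have : (0:ℝ) < ((∑ i, k i : ℕ) : ℝ) := by exact_mod_cast hK
        positivity
      have hclimsup := const_mul_limsup (f := 𝓝[≠] (0:X)) hKM0 hG0 hG2 happ
      refine le_trans ?_ hclimsup
      -- t ≤ (K/M) * δ
      have hcast : ((∑ i, k i : ℕ) : ℝ) / M = ∑ i, (k i : ℝ) / M := by
        rw [Nat.cast_sum, Finset.sum_div]
      have hlow : (∑ i, w i) - m * η ≤ ∑ i, (k i : ℝ) / M := by
        have := Finset.sum_le_sum fun i (_ : i ∈ Finset.univ) => (hq_gt i).le
        rw [Finset.sum_sub_distrib] at this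
        simpa [Finset.sum_const, nsmul_eq_mul] using this
      rw [hcast]
      nlinarith [mul_le_mul_of_nonneg_left hlow hδ.le]
  calc t ≤ _ := hmain
    _ ≤ _ := limsup_le_limsup (Eventually.of_forall hpt)
        (isCoboundedUnder_le_of_le _ fun u => Finset.sum_nonneg fun i _ =>
          mul_nonneg (by positivity) (D_nonneg (hx i) u))
        (isBoundedUnder_of ⟨2 * ∑ i, w i, hbound⟩)


lemma freq_of_norm {Z : Type*} [NormedAddCommGroup Z] {Q : Z → Prop}
    (h : ∀ ε > 0, ∃ y : Z, y ≠ 0 ∧ ‖y‖ < ε ∧ Q y) : ∃ᶠ y in 𝓝[≠] (0:Z), Q y := by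
  rw [(Metric.nhdsWithin_basis_ball).frequently_iff]
  intro ε hε
  obtain ⟨y, h1, h2, h3⟩ := h ε hε
  exact ⟨y, ⟨mem_ball_zero_iff.mpr h2, h1⟩, h3⟩

lemma exists_of_freq {Z : Type*} [NormedAddCommGroup Z] {Q : Z → Prop}
    (h : ∃ᶠ y in 𝓝[≠] (0:Z), Q y) : ∀ ε > 0, ∃ y : Z, y ≠ 0 ∧ ‖y‖ < ε ∧ Q y := by
  rw [(Metric.nhdsWithin_basis_ball).frequently_iff] at h
  intro ε hε
  obtain ⟨y, ⟨h2, h1⟩, h3⟩ := h ε hε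
  exact ⟨y, h1, mem_ball_zero_iff.mp h2, h3⟩

lemma rpow_cancel {b P : ℝ} (hb : 0 ≤ b) (hP : 0 < P) : (b ^ P) ^ (1/P) = b := by
  rw [← Real.rpow_mul hb, mul_one_div, div_self hP.ne', Real.rpow_one]

lemma eq_one_of_rpow {b P : ℝ} (hb : 0 ≤ b) (hP : 0 < P) (h : b ^ P = 1) : b = 1 := by
  have h2 := congrArg (· ^ (1/P)) h
  simp only [Real.one_rpow] at h2
  rwa [rpow_cancel hb hP] at h2

lemma le_one_of_rpow {b P : ℝ} (hb : 0 ≤ b) (hP : 0 < P) (h : b ^ P ≤ 1) : b ≤ 1 := by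
  by_contra hc
  push_neg at hc
  have : (1:ℝ) ^ P < b ^ P := Real.rpow_lt_rpow (by norm_num) hc hP
  rw [Real.one_rpow] at this
  linarith

lemma rpow_sub_one_mul {a P : ℝ} (ha : 0 ≤ a) (hP : 1 < P) : a ^ (P - 1) * a = a ^ P := by
  rcases eq_or_lt_of_le ha with rfl | ha'
  · rw [Real.zero_rpow (by linarith), Real.zero_rpow (by linarith), zero_mul]
  · rw [← Real.rpow_add_one (ne_of_gt ha'), sub_add_cancel]

/-- Per-component estimate. -/
lemma comp_bound {P : ℝ} (hP : 1 < P) {xi e u : E} (hu : u ≠ 0)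
    (ha1 : ‖xi‖ ≤ 1) (he : ‖e‖ = 1) (hrel : xi ≠ 0 → e = ‖xi‖⁻¹ • xi) :
    ‖xi‖ ^ P * D e u ≤ ‖xi‖ ^ (P - 1) * ((‖xi + u‖ + ‖xi - u‖ - 2 * ‖xi‖) / ‖u‖) := by
  rcases eq_or_ne xi 0 with rfl | hxi
  · simp only [norm_zero, Real.zero_rpow (by linarith : P ≠ 0),
      Real.zero_rpow (by linarith : P - 1 ≠ 0), zero_mul, le_refl]
  · have ha0 : 0 < ‖xi‖ := norm_pos_iff.mpr hxi
    have hedef := hrel hxi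
    have hainv : 1 ≤ ‖xi‖⁻¹ := (one_le_inv₀ ha0).mpr ha1
    have hid : (‖xi + u‖ + ‖xi - u‖ - 2 * ‖xi‖) / ‖u‖ = D e (‖xi‖⁻¹ • u) := by
      rw [D, hedef]
      have e1 : ‖xi‖⁻¹ • xi + ‖xi‖⁻¹ • u = ‖xi‖⁻¹ • (xi + u) := (smul_add _ _ _).symm
      have e2 : ‖xi‖⁻¹ • xi - ‖xi‖⁻¹ • u = ‖xi‖⁻¹ • (xi - u) := (smul_sub _ _ _).symm
      rw [e1, e2, norm_smul, norm_smul, norm_smul]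
      simp only [Real.norm_eq_abs, abs_of_pos (inv_pos.mpr ha0)]
      rw [div_eq_div_iff (norm_ne_zero_iff.mpr hu)
        (mul_ne_zero (inv_ne_zero ha0.ne') (norm_ne_zero_iff.mpr hu))]
      field_simp
    rw [hid]
    have hmono : D e u ≤ D e (‖xi‖⁻¹ • u) := D_mono he hu hainv
    have hexp : ‖xi‖ ^ P ≤ ‖xi‖ ^ (P - 1) :=
      Real.rpow_le_rpow_of_exponent_ge ha0 ha1 (by linarith)
    have hD0 : 0 ≤ D e u := D_nonneg he u
    nlinarith [Real.rpow_nonneg (norm_nonneg xi) P]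


end ARAux

open ARAux

/-- If `X` and `Y` are `δ`-average rough and `1 < p < ∞`, then `X ⊕_p Y` is
`2^{-1/p}·δ`-average rough. -/
theorem averageRough_prod_lp (X Y : Type*)
    [NormedAddCommGroup X] [NormedSpace ℝ X] [CompleteSpace X]
    [NormedAddCommGroup Y] [NormedSpace ℝ Y] [CompleteSpace Y]
    (p : ℝ≥0∞) [Fact (1 ≤ p)] (hp : 1 < p) (hp' : p ≠ ⊤)
    (δ : ℝ) (hδ : 0 < δ) (hX : AverageRough X δ) (hY : AverageRough Y δ) :
    AverageRough (WithLp p (X × Y)) ((2 : ℝ) ^ (-(1 : ℝ) / p.toReal) * δ) := by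
  classical
  intro n hn z hz
  have hP : 1 < p.toReal := by
    have h := ENNReal.toReal_strict_mono hp' hp
    simpa using h
  set P : ℝ := p.toReal with hPdef
  have hP0 : (0:ℝ) < P := one_pos.trans hP
  have hn0 : (0:ℝ) < (n:ℝ) := by exact_mod_cast hn
  have hc0 : (0:ℝ) < (2:ℝ) ^ (-(1:ℝ)/P) := Real.rpow_pos_of_pos two_pos _
  have hc1 : (2:ℝ) ^ (-(1:ℝ)/P) ≤ 1 :=
    Real.rpow_le_one_of_one_le_of_nonpos one_le_two
      (by rw [neg_div]; exact neg_nonpos.mpr (by positivity))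
  have hprod : (2:ℝ) ^ ((1:ℝ)/P) * (2:ℝ) ^ (-(1:ℝ)/P) = 1 := by
    have hexp : (1:ℝ)/P + -(1:ℝ)/P = 0 := by ring
    rw [← Real.rpow_add two_pos, hexp, Real.rpow_zero]
  have hZnorm : ∀ w : WithLp p (X × Y), ‖w‖ = (‖w.fst‖ ^ P + ‖w.snd‖ ^ P) ^ (1/P) :=
    fun w => WithLp.prod_norm_eq_add (by exact ENNReal.toReal_pos (by positivity) hp') w
  have hcomp : ∀ i : Fin n, ‖(z i).fst‖ ^ P + ‖(z i).snd‖ ^ P = 1 := by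
    intro i
    have h := hZnorm (z i)
    rw [hz i] at h
    exact eq_one_of_rpow (by positivity) (by positivity) h.symm
  have hF2 : ∀ w : WithLp p (X × Y),
      (1/(n:ℝ)) * ∑ i, (‖z i + w‖ + ‖z i - w‖ - 2)/‖w‖ ≤ 2 := by
    intro w
    have h1 : ∑ i, (‖z i + w‖ + ‖z i - w‖ - 2)/‖w‖ ≤ (n:ℝ) * 2 := by
      calc ∑ i, (‖z i + w‖ + ‖z i - w‖ - 2)/‖w‖ ≤ ∑ _i : Fin n, (2:ℝ) :=
            Finset.sum_le_sum fun i _ => D_le_two (hz i) w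
        _ = (n:ℝ) * 2 := by simp [Finset.sum_const, nsmul_eq_mul]
    calc (1/(n:ℝ)) * ∑ i, (‖z i + w‖ + ‖z i - w‖ - 2)/‖w‖
        ≤ (1/(n:ℝ)) * ((n:ℝ) * 2) := by
          apply mul_le_mul_of_nonneg_left h1 (by positivity)
      _ = 2 := by field_simp
  have hBdd : IsBoundedUnder (· ≤ ·) (𝓝[≠] (0 : WithLp p (X × Y)))
      (fun w => (1/(n:ℝ)) * ∑ i, (‖z i + w‖ + ‖z i - w‖ - 2)/‖w‖) :=
    isBoundedUnder_of ⟨2, hF2⟩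
  apply le_of_forall_lt_le
  intro t ht
  refine le_limsup_of_frequently_le ?_ hBdd
  by_cases hA : ∀ i, (z i).fst = 0
  · -- pure Y case
    have hyunit : ∀ i, ‖(z i).snd‖ = 1 := by
      intro i
      have h := hcomp i
      rw [hA i, norm_zero, Real.zero_rpow hP0.ne', zero_add] at h
      exact eq_one_of_rpow (norm_nonneg _) hP0 h
    haveI : Nontrivial Y := by
      refine ⟨⟨(z ⟨0,hn⟩).snd, 0, fun h => ?_⟩⟩
      have h1 := hyunit ⟨0,hn⟩
      rw [h, norm_zero] at h1; norm_num at h1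
    have hYlim := hY n hn (fun i => (z i).snd) hyunit
    have hBnn : ∀ v : Y, 0 ≤ (1/(n:ℝ)) * ∑ i, (‖(z i).snd + v‖ + ‖(z i).snd - v‖ - 2)/‖v‖ :=
      fun v => mul_nonneg (by positivity)
        (Finset.sum_nonneg fun i _ => D_nonneg (hyunit i) v)
    have htδ : t < δ := lt_of_lt_of_le ht (by nlinarith)
    have hfreq := freq_lt_limsup hBnn (lt_of_lt_of_le htδ hYlim)
    apply freq_of_norm
    intro ε hε
    obtain ⟨v, hv0, hvε, hvt⟩ := exists_of_freq hfreq ε hε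
    set w : WithLp p (X × Y) := (WithLp.equiv p (X × Y)).symm ((0 : X), v) with hw
    have hwfst : w.fst = (0 : X) := rfl
    have hwsnd : w.snd = v := rfl
    have hwnorm : ‖w‖ = ‖v‖ := by
      rw [hZnorm w, hwfst, hwsnd, norm_zero, Real.zero_rpow hP0.ne', zero_add,
        rpow_cancel (norm_nonneg v) hP0]
    refine ⟨w, fun h => hv0 (congrArg WithLp.snd h), by rwa [hwnorm], ?_⟩
    have hplus : ∀ i, ‖z i + w‖ = ‖(z i).snd + v‖ := by
      intro i
      have h1 : (z i + w).fst = (z i).fst + (0 : X) := rfl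
      have h2 : (z i + w).snd = (z i).snd + v := rfl
      rw [hZnorm (z i + w), h1, h2, hA i, add_zero, norm_zero, Real.zero_rpow hP0.ne',
        zero_add, rpow_cancel (norm_nonneg _) hP0]
    have hminus : ∀ i, ‖z i - w‖ = ‖(z i).snd - v‖ := by
      intro i
      have h1 : (z i - w).fst = (z i).fst - (0 : X) := rfl
      have h2 : (z i - w).snd = (z i).snd - v := rfl
      rw [hZnorm (z i - w), h1, h2, hA i, sub_zero, norm_zero, Real.zero_rpow hP0.ne',
        zero_add, rpow_cancel (norm_nonneg _) hP0]
    have heq : (1/(n:ℝ)) * ∑ i, (‖z i + w‖ + ‖z i - w‖ - 2)/‖w‖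
        = (1/(n:ℝ)) * ∑ i, (‖(z i).snd + v‖ + ‖(z i).snd - v‖ - 2)/‖v‖ := by
      congr 1
      exact Finset.sum_congr rfl fun i _ => by rw [hplus i, hminus i, hwnorm]
    rw [heq]
    exact hvt.le
  · by_cases hB : ∀ i, (z i).snd = 0
    · -- pure X case
      have hxunit : ∀ i, ‖(z i).fst‖ = 1 := by
        intro i
        have h := hcomp i
        rw [hB i, norm_zero, Real.zero_rpow hP0.ne', add_zero] at h
        exact eq_one_of_rpow (norm_nonneg _) hP0 h
      haveI : Nontrivial X := by
        refine ⟨⟨(z ⟨0,hn⟩).fst, 0, fun h => ?_⟩⟩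
        have h1 := hxunit ⟨0,hn⟩
        rw [h, norm_zero] at h1; norm_num at h1
      have hXlim := hX n hn (fun i => (z i).fst) hxunit
      have hBnn : ∀ u : X, 0 ≤ (1/(n:ℝ)) * ∑ i, (‖(z i).fst + u‖ + ‖(z i).fst - u‖ - 2)/‖u‖ :=
        fun u => mul_nonneg (by positivity)
          (Finset.sum_nonneg fun i _ => D_nonneg (hxunit i) u)
      have htδ : t < δ := lt_of_lt_of_le ht (by nlinarith)
      have hfreq := freq_lt_limsup hBnn (lt_of_lt_of_le htδ hXlim)
      apply freq_of_norm
      intro ε hε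
      obtain ⟨u, hu0, huε, hut⟩ := exists_of_freq hfreq ε hε
      set w : WithLp p (X × Y) := (WithLp.equiv p (X × Y)).symm (u, (0 : Y)) with hw
      have hwfst : w.fst = u := rfl
      have hwsnd : w.snd = (0 : Y) := rfl
      have hwnorm : ‖w‖ = ‖u‖ := by
        rw [hZnorm w, hwfst, hwsnd, norm_zero, Real.zero_rpow hP0.ne', add_zero,
          rpow_cancel (norm_nonneg u) hP0]
      refine ⟨w, fun h => hu0 (congrArg WithLp.fst h), by rwa [hwnorm], ?_⟩
      have hplus : ∀ i, ‖z i + w‖ = ‖(z i).fst + u‖ := by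
        intro i
        have h1 : (z i + w).fst = (z i).fst + u := rfl
        have h2 : (z i + w).snd = (z i).snd + (0 : Y) := rfl
        rw [hZnorm (z i + w), h1, h2, hB i, add_zero, norm_zero, Real.zero_rpow hP0.ne',
          add_zero, rpow_cancel (norm_nonneg _) hP0]
      have hminus : ∀ i, ‖z i - w‖ = ‖(z i).fst - u‖ := by
        intro i
        have h1 : (z i - w).fst = (z i).fst - u := rfl
        have h2 : (z i - w).snd = (z i).snd - (0 : Y) := rfl
        rw [hZnorm (z i - w), h1, h2, hB i, sub_zero, norm_zero, Real.zero_rpow hP0.ne',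
          add_zero, rpow_cancel (norm_nonneg _) hP0]
      have heq : (1/(n:ℝ)) * ∑ i, (‖z i + w‖ + ‖z i - w‖ - 2)/‖w‖
          = (1/(n:ℝ)) * ∑ i, (‖(z i).fst + u‖ + ‖(z i).fst - u‖ - 2)/‖u‖ := by
        congr 1
        exact Finset.sum_congr rfl fun i _ => by rw [hplus i, hminus i, hwnorm]
      rw [heq]
      exact hut.le
    · -- main case
      push_neg at hA hB
      obtain ⟨i0, hi0⟩ := hA
      obtain ⟨j0, hj0⟩ := hB
      haveI : Nontrivial X := ⟨⟨(z i0).fst, 0, hi0⟩⟩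
      haveI : Nontrivial Y := ⟨⟨(z j0).snd, 0, hj0⟩⟩
      set xh : Fin n → X := fun i =>
        if h : (z i).fst = 0 then ‖(z i0).fst‖⁻¹ • (z i0).fst else ‖(z i).fst‖⁻¹ • (z i).fst
        with hxh
      set yh : Fin n → Y := fun i =>
        if h : (z i).snd = 0 then ‖(z j0).snd‖⁻¹ • (z j0).snd else ‖(z i).snd‖⁻¹ • (z i).snd
        with hyh
      have hxh1 : ∀ i, ‖xh i‖ = 1 := by
        intro i; rw [hxh]; dsimp only; split_ifs with h
        exacts [unit_norm _ hi0, unit_norm _ h]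
      have hyh1 : ∀ i, ‖yh i‖ = 1 := by
        intro i; rw [hyh]; dsimp only; split_ifs with h
        exacts [unit_norm _ hj0, unit_norm _ h]
      have hxrel : ∀ i, (z i).fst ≠ 0 → xh i = ‖(z i).fst‖⁻¹ • (z i).fst := by
        intro i h; rw [hxh]; dsimp only; rw [dif_neg h]
      have hyrel : ∀ i, (z i).snd ≠ 0 → yh i = ‖(z i).snd‖⁻¹ • (z i).snd := by
        intro i h; rw [hyh]; dsimp only; rw [dif_neg h]
      set wX : Fin n → ℝ := fun i => ‖(z i).fst‖ ^ P / n with hwX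
      set wY : Fin n → ℝ := fun i => ‖(z i).snd‖ ^ P / n with hwY
      have hwX0 : ∀ i, 0 ≤ wX i := fun i => by rw [hwX]; positivity
      have hwY0 : ∀ i, 0 ≤ wY i := fun i => by rw [hwY]; positivity
      have hwsum : (∑ i, wX i) + (∑ i, wY i) = 1 := by
        rw [← Finset.sum_add_distrib]
        have h1 : ∀ i : Fin n, wX i + wY i = 1/(n:ℝ) := by
          intro i
          rw [hwX, hwY]
          dsimp only
          rw [← add_div, hcomp i]
        rw [Finset.sum_congr rfl fun i _ => h1 i]
        simp [Finset.sum_const, nsmul_eq_mul]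
        field_simp
      have hAx := weighted hδ hX xh hxh1 wX hwX0
      have hBy := weighted hδ hY yh hyh1 wY hwY0
      -- key pointwise inequality
      have hkey : ∀ (u : X) (v : Y), u ≠ 0 → v ≠ 0 → ‖v‖ = ‖u‖ →
          (2:ℝ) ^ (-(1:ℝ)/P) * ((∑ i, wX i * D (xh i) u) + (∑ i, wY i * D (yh i) v))
            ≤ (1/(n:ℝ)) * ∑ i,
              (‖z i + (WithLp.equiv p (X × Y)).symm (u,v)‖
                + ‖z i - (WithLp.equiv p (X × Y)).symm (u,v)‖ - 2)
              / ‖(WithLp.equiv p (X × Y)).symm (u,v)‖ := by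
        intro u v hu hv huv
        set w : WithLp p (X × Y) := (WithLp.equiv p (X × Y)).symm (u, v) with hwdef
        have hu0 : 0 < ‖u‖ := norm_pos_iff.mpr hu
        have hwfst : w.fst = u := rfl
        have hwsnd : w.snd = v := rfl
        have hwnorm : ‖w‖ = (2:ℝ) ^ ((1:ℝ)/P) * ‖u‖ := by
          rw [hZnorm w, hwfst, hwsnd, huv, ← two_mul,
            Real.mul_rpow (by norm_num) (by positivity),
            rpow_cancel (norm_nonneg u) hP0]
        have hidx : ∀ i, wX i * D (xh i) u + wY i * D (yh i) v
            ≤ (1/(n:ℝ)) * ((‖z i + w‖ + ‖z i - w‖ - 2) / ‖u‖) := by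
          intro i
          have ha1 : ‖(z i).fst‖ ≤ 1 := by
            apply le_one_of_rpow (norm_nonneg _) hP0
            nlinarith [hcomp i, Real.rpow_nonneg (norm_nonneg (z i).snd) P]
          have hb1 : ‖(z i).snd‖ ≤ 1 := by
            apply le_one_of_rpow (norm_nonneg _) hP0
            nlinarith [hcomp i, Real.rpow_nonneg (norm_nonneg (z i).fst) P]
          have hplus : ‖(z i).fst‖ ^ (P-1) * ‖(z i).fst + u‖
              + ‖(z i).snd‖ ^ (P-1) * ‖(z i).snd + v‖ ≤ ‖z i + w‖ := by
            have e1 : (z i + w).fst = (z i).fst + u := rfl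
            have e2 : (z i + w).snd = (z i).snd + v := rfl
            rw [hZnorm (z i + w), e1, e2]
            exact holder_pair hP (norm_nonneg _) (norm_nonneg _) (norm_nonneg _)
              (norm_nonneg _) (hcomp i)
          have hminus : ‖(z i).fst‖ ^ (P-1) * ‖(z i).fst - u‖
              + ‖(z i).snd‖ ^ (P-1) * ‖(z i).snd - v‖ ≤ ‖z i - w‖ := by
            have e1 : (z i - w).fst = (z i).fst - u := rfl
            have e2 : (z i - w).snd = (z i).snd - v := rfl
            rw [hZnorm (z i - w), e1, e2]
            exact holder_pair hP (norm_nonneg _) (norm_nonneg _) (norm_nonneg _)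
              (norm_nonneg _) (hcomp i)
          have h2eq : ‖(z i).fst‖ ^ (P-1) * ‖(z i).fst‖
              + ‖(z i).snd‖ ^ (P-1) * ‖(z i).snd‖ = 1 := by
            rw [rpow_sub_one_mul (norm_nonneg _) hP, rpow_sub_one_mul (norm_nonneg _) hP,
              hcomp i]
          have hnum : ‖(z i).fst‖ ^ (P-1) * (‖(z i).fst + u‖ + ‖(z i).fst - u‖ - 2*‖(z i).fst‖)
              + ‖(z i).snd‖ ^ (P-1) * (‖(z i).snd + v‖ + ‖(z i).snd - v‖ - 2*‖(z i).snd‖)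
              ≤ ‖z i + w‖ + ‖z i - w‖ - 2 := by nlinarith [hplus, hminus, h2eq]
          have hcX := comp_bound hP hu ha1 (hxh1 i) (hxrel i)
          have hcY := comp_bound hP hv hb1 (hyh1 i) (hyrel i)
          rw [huv] at hcY
          have hstep : ‖(z i).fst‖ ^ P * D (xh i) u + ‖(z i).snd‖ ^ P * D (yh i) v
              ≤ (‖z i + w‖ + ‖z i - w‖ - 2) / ‖u‖ := by
            calc ‖(z i).fst‖ ^ P * D (xh i) u + ‖(z i).snd‖ ^ P * D (yh i) v
                ≤ ‖(z i).fst‖ ^ (P-1) * ((‖(z i).fst + u‖ + ‖(z i).fst - u‖ - 2*‖(z i).fst‖)/‖u‖)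
                  + ‖(z i).snd‖ ^ (P-1) * ((‖(z i).snd + v‖ + ‖(z i).snd - v‖ - 2*‖(z i).snd‖)/‖u‖) :=
                  add_le_add hcX hcY
              _ = (‖(z i).fst‖ ^ (P-1) * (‖(z i).fst + u‖ + ‖(z i).fst - u‖ - 2*‖(z i).fst‖)
                  + ‖(z i).snd‖ ^ (P-1) * (‖(z i).snd + v‖ + ‖(z i).snd - v‖ - 2*‖(z i).snd‖))/‖u‖ := by
                  rw [mul_div_assoc', mul_div_assoc', ← add_div]
              _ ≤ (‖z i + w‖ + ‖z i - w‖ - 2) / ‖u‖ := by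
                  gcongr
          rw [hwX, hwY]
          dsimp only
          have := mul_le_mul_of_nonneg_left hstep (le_of_lt (by positivity : (0:ℝ) < 1/(n:ℝ)))
          calc ‖(z i).fst‖ ^ P / n * D (xh i) u + ‖(z i).snd‖ ^ P / n * D (yh i) v
              = (1/(n:ℝ)) * (‖(z i).fst‖ ^ P * D (xh i) u + ‖(z i).snd‖ ^ P * D (yh i) v) := by
                ring
            _ ≤ (1/(n:ℝ)) * ((‖z i + w‖ + ‖z i - w‖ - 2) / ‖u‖) := this
        have hsum := Finset.sum_le_sum fun i (_ : i ∈ Finset.univ) => hidx i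
        rw [← Finset.mul_sum] at hsum
        have hcq : (2:ℝ) ^ (-(1:ℝ)/P) = ((2:ℝ) ^ ((1:ℝ)/P))⁻¹ := by
          rw [neg_div, Real.rpow_neg (by norm_num : (0:ℝ) ≤ 2)]
        have hdiv : ∀ N : ℝ, N / ‖w‖ = (2:ℝ) ^ (-(1:ℝ)/P) * (N/‖u‖) := by
          intro N
          rw [hwnorm, div_mul_eq_div_div, div_right_comm, hcq, ← div_eq_inv_mul]
        calc (2:ℝ) ^ (-(1:ℝ)/P) * ((∑ i, wX i * D (xh i) u) + (∑ i, wY i * D (yh i) v))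
            = (2:ℝ) ^ (-(1:ℝ)/P) * (∑ i, (wX i * D (xh i) u + wY i * D (yh i) v)) := by
              rw [Finset.sum_add_distrib]
          _ ≤ (2:ℝ) ^ (-(1:ℝ)/P) * ((1/(n:ℝ)) * ∑ i, (‖z i + w‖ + ‖z i - w‖ - 2) / ‖u‖) :=
              mul_le_mul_of_nonneg_left hsum hc0.le
          _ = (1/(n:ℝ)) * ∑ i, (‖z i + w‖ + ‖z i - w‖ - 2) / ‖w‖ := by
              rw [Finset.mul_sum, Finset.mul_sum, Finset.mul_sum]
              apply Finset.sum_congr rfl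
              intro i _
              rw [hdiv]
              ring
      -- frequency argument
      have hAnn : ∀ u : X, 0 ≤ ∑ i, wX i * D (xh i) u :=
        fun u => Finset.sum_nonneg fun i _ => mul_nonneg (hwX0 i) (D_nonneg (hxh1 i) u)
      have hBnn : ∀ v : Y, 0 ≤ ∑ i, wY i * D (yh i) v :=
        fun v => Finset.sum_nonneg fun i _ => mul_nonneg (hwY0 i) (D_nonneg (hyh1 i) v)
      set c : ℝ := (2:ℝ) ^ (-(1:ℝ)/P) with hcdef
      have htc : t / c < δ := by
        rw [div_lt_iff₀ hc0]
        linarith [ht, mul_comm c δ]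
      set ε : ℝ := (δ - t/c)/2 with hεdef
      have hε0 : 0 < ε := by rw [hεdef]; linarith
      have hs1 : δ * (∑ i, wX i) - ε < limsup (fun u => ∑ i, wX i * D (xh i) u) (𝓝[≠] (0:X)) :=
        lt_of_lt_of_le (by linarith) hAx
      have hs2 : δ * (∑ i, wY i) - ε < limsup (fun v => ∑ i, wY i * D (yh i) v) (𝓝[≠] (0:Y)) :=
        lt_of_lt_of_le (by linarith) hBy
      have hfreqA := freq_lt_limsup hAnn hs1
      have hfreqB := freq_lt_limsup hBnn hs2
      apply freq_of_norm
      intro ε' hε'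
      obtain ⟨u, hu0, huε, huA⟩ := exists_of_freq hfreqA (ε' * c) (by positivity)
      obtain ⟨v0, hv00, hv0u, hv0B⟩ := exists_of_freq hfreqB ‖u‖ (norm_pos_iff.mpr hu0)
      have hv0n : 0 < ‖v0‖ := norm_pos_iff.mpr hv00
      set cs : ℝ := ‖u‖/‖v0‖ with hcs
      have hcs1 : 1 ≤ cs := by
        rw [hcs, le_div_iff₀ hv0n]
        linarith [hv0u]
      have hcs0 : 0 < cs := lt_of_lt_of_le one_pos hcs1
      set v : Y := cs • v0 with hvdef
      have hv0' : v ≠ 0 := smul_ne_zero hcs0.ne' hv00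
      have hvnorm : ‖v‖ = ‖u‖ := by
        rw [hvdef, norm_smul, Real.norm_eq_abs, abs_of_pos hcs0, hcs]
        field_simp
      have hBmono : (∑ i, wY i * D (yh i) v0) ≤ ∑ i, wY i * D (yh i) v :=
        Finset.sum_le_sum fun i _ =>
          mul_le_mul_of_nonneg_left (D_mono (hyh1 i) hv00 hcs1) (hwY0 i)
      set w : WithLp p (X × Y) := (WithLp.equiv p (X × Y)).symm (u, v) with hwdef
      have hwnorm : ‖w‖ = (2:ℝ) ^ ((1:ℝ)/P) * ‖u‖ := by
        have hwfst : w.fst = u := rfl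
        have hwsnd : w.snd = v := rfl
        rw [hZnorm w, hwfst, hwsnd, hvnorm, ← two_mul,
          Real.mul_rpow (by norm_num) (by positivity),
          rpow_cancel (norm_nonneg u) hP0]
      refine ⟨w, fun h => hu0 (congrArg WithLp.fst h), ?_, ?_⟩
      · rw [hwnorm]
        have h2P : (0:ℝ) < (2:ℝ) ^ ((1:ℝ)/P) := Real.rpow_pos_of_pos two_pos _
        calc (2:ℝ) ^ ((1:ℝ)/P) * ‖u‖ < (2:ℝ) ^ ((1:ℝ)/P) * (ε' * c) :=
              mul_lt_mul_of_pos_left huε h2P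
          _ = ε' := by
              rw [hcdef, mul_comm ε' _, ← mul_assoc, hprod, one_mul]
      · have hk := hkey u v hu0 hv0' hvnorm
        have hAB : t/c ≤ (∑ i, wX i * D (xh i) u) + (∑ i, wY i * D (yh i) v) := by
          have h1 : δ * (∑ i, wX i) + δ * (∑ i, wY i) = δ := by
            rw [← mul_add, hwsum, mul_one]
          linarith [huA, lt_of_lt_of_le hv0B hBmono]
        have h2 : t ≤ c * ((∑ i, wX i * D (xh i) u) + (∑ i, wY i * D (yh i) v)) := by
          have := mul_le_mul_of_nonneg_left hAB hc0.le
          rw [mul_div_cancel₀] at this  -- c * (t/c) = t ??  check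
          · linarith
          · exact hc0.ne'
        exact le_trans h2 hk
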